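/- Let k be a field and r ≥ 2 an integer. Let X = X′ ⊕ J_2 where X′ is any finite direct sum of modules J_{p_i} with p_i ≥ 1, and Y = Y′ ⊕ J_r with Y′ = ⊕_{j} J_{q_j} where every q_j ≥ r. Let C : X → Y be a k[T]-linear map with T²∘C = 0, and assume that the component c : J_2 → J_r of C between the distinguished summands satisfies T∘c ≠ 0. Then there exist a k[T]-linear map C′ : X′ → Y′ with T²∘C′ = 0 and k[T]-module isomorphisms α : X → X′ ⊕ J_2 and β : Y → Y′ ⊕ J_r such that β∘C = (C′ ⊕ τ)∘α, where τ : J_2 → J_r is multiplication by T^{r−2}. In particular, the triple (X, Y, C) has a direct summand isomorphic to (J_2, J_r, τ). -/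

import Mathlib

open Polynomial

/-- `J k a` is the `k[T]`-module `k[T]/(T^a)` (with `T` the polynomial variable `X`). -/
abbrev J (k : Type*) [Field k] (a : ℕ) : Type _ :=
  Polynomial k ⧸ Ideal.span {(X : Polynomial k) ^ a}

/-- Multiplication by `T^e` as a `k[T]`-linear map `J_a → J_b`; it is well defined
when `b ≤ e + a`, and we set it to `0` otherwise. -/
noncomputable def mulTpow (k : Type*) [Field k] (a b e : ℕ) :
    J k a →ₗ[Polynomial k] J k b :=
  if h : b ≤ e + a then
    Submodule.liftQ (Ideal.span {(X : Polynomial k) ^ a})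
      ((Ideal.span {(X : Polynomial k) ^ b}).mkQ ∘ₗ
        ((X : Polynomial k) ^ e • (LinearMap.id : Polynomial k →ₗ[Polynomial k] Polynomial k)))
      (by
        refine Submodule.span_le.mpr ?_
        intro x hx
        rw [Set.mem_singleton_iff] at hx
        subst hx
        simp only [SetLike.mem_coe, LinearMap.mem_ker, LinearMap.comp_apply,
          LinearMap.smul_apply, LinearMap.id_apply, Submodule.mkQ_apply,
          Submodule.Quotient.mk_eq_zero, smul_eq_mul]
        exact Ideal.mem_span_singleton.mpr (by
          rw [← pow_add]; exact pow_dvd_pow X h))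
  else 0

section Aux

variable {k : Type*} [Field k]

/-- Abbreviation for the quotient map onto `J k a`. -/
noncomputable def Jmk (k : Type*) [Field k] (a : ℕ) (f : Polynomial k) : J k a :=
  Ideal.Quotient.mk (Ideal.span {(X : Polynomial k) ^ a}) f

lemma Jmk_surj (a : ℕ) (x : J k a) : ∃ f, Jmk k a f = x :=
  Ideal.Quotient.mk_surjective x

lemma Jmk_smul (a : ℕ) (f h : Polynomial k) :
    f • (Jmk k a h) = Jmk k a (f * h) := rfl

@[simp] lemma Jmk_mul (a : ℕ) (f h : Polynomial k) :
    (Jmk k a f) * (Jmk k a h) = Jmk k a (f * h) := by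
  rw [Jmk, Jmk, Jmk, map_mul]

lemma Jmk_eq_zero (a : ℕ) (f : Polynomial k) :
    (Jmk k a f : J k a) = 0 ↔ X ^ a ∣ f := by
  rw [Jmk, Ideal.Quotient.eq_zero_iff_mem, Ideal.mem_span_singleton]

lemma Jmk_one (a : ℕ) : Jmk k a 1 = 1 := by rw [Jmk, map_one]

lemma lin_mk {a : ℕ} {M : Type*} [AddCommGroup M] [Module (Polynomial k) M]
    (φ : J k a →ₗ[Polynomial k] M) (f : Polynomial k) :
    φ (Jmk k a f) = f • φ (Jmk k a 1) := by
  rw [← map_smul, Jmk_smul, mul_one]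

lemma mulTpow_mk (a b e : ℕ) (h : b ≤ e + a) (f : Polynomial k) :
    mulTpow k a b e (Jmk k a f) = Jmk k b (X ^ e * f) := by
  rw [mulTpow, dif_pos h]
  rfl

lemma pow_dvd_cancel (m n : ℕ) (f : Polynomial k) (h : X ^ (m + n) ∣ X ^ m * f) :
    (X : Polynomial k) ^ n ∣ f := by
  obtain ⟨u, hu⟩ := h
  refine ⟨u, ?_⟩
  have hX : (X : Polynomial k) ^ m ≠ 0 := pow_ne_zero _ X_ne_zero
  apply mul_left_cancel₀ hX
  rw [hu, pow_add]; ring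

end Aux

section Shear

variable {R : Type*} [CommRing R] {M N : Type*} [AddCommGroup M] [AddCommGroup N]
  [Module R M] [Module R N]

/-- The shear `(x, t) ↦ (x, t + σ x)` as a linear automorphism of `M × N`. -/
def shearL (σ : M →ₗ[R] N) : (M × N) ≃ₗ[R] (M × N) where
  toFun p := (p.1, p.2 + σ p.1)
  invFun p := (p.1, p.2 - σ p.1)
  map_add' p q := by ext <;> simp <;> abel
  map_smul' c p := by ext <;> simp
  left_inv p := by ext <;> simp
  right_inv p := by ext <;> simp

/-- The shear `(y, z) ↦ (y + ρ z, z)` as a linear automorphism of `M × N`. -/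
def shearR (ρ : N →ₗ[R] M) : (M × N) ≃ₗ[R] (M × N) where
  toFun p := (p.1 + ρ p.2, p.2)
  invFun p := (p.1 - ρ p.2, p.2)
  map_add' p q := by ext <;> simp <;> abel
  map_smul' c p := by ext <;> simp
  left_inv p := by ext <;> simp
  right_inv p := by ext <;> simp

@[simp] lemma shearL_apply (σ : M →ₗ[R] N) (pp : M × N) :
    shearL σ pp = (pp.1, pp.2 + σ pp.1) := rfl

@[simp] lemma shearR_apply (ρ : N →ₗ[R] M) (pp : M × N) :
    shearR ρ pp = (pp.1 + ρ pp.2, pp.2) := rfl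

/-- Multiplication by a unit of `R ⧸ I` as a linear automorphism over `R`. -/
noncomputable def mulUnitEquiv (I : Ideal R) (a b : R ⧸ I) (hab : a * b = 1) :
    (R ⧸ I) ≃ₗ[R] (R ⧸ I) :=
  LinearEquiv.ofLinear (LinearMap.mulLeft R a) (LinearMap.mulLeft R b)
    (by rw [← LinearMap.mulLeft_mul, hab, LinearMap.mulLeft_one])
    (by rw [← LinearMap.mulLeft_mul, mul_comm b a, hab, LinearMap.mulLeft_one])

@[simp] lemma mulUnitEquiv_apply (I : Ideal R) (a b : R ⧸ I) (hab : a * b = 1) (x : R ⧸ I) :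
    mulUnitEquiv I a b hab x = a * x := rfl

end Shear

set_option maxHeartbeats 1000000 in
/-- Splitting off a `(J_2, J_r, T^{r-2})` summand: with `r ≥ 2`, arbitrary `p_i ≥ 1`,
all `q_j ≥ r`, if `C : X' ⊕ J_2 → Y' ⊕ J_r` satisfies `T² ∘ C = 0` and the component
`c : J_2 → J_r` between the distinguished summands has `T ∘ c ≠ 0`, then after suitable
isomorphisms `C` is the direct sum of a map `C' : X' → Y'` (with `T² ∘ C' = 0`) and
multiplication by `T^{r-2} : J_2 → J_r`. -/
theorem split_off_J2_Jr (k : Type*) [Field k] (rr : ℕ) (hrr : 2 ≤ rr)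
    (r s : ℕ) (p : Fin r → ℕ) (q : Fin s → ℕ)
    (hp : ∀ i, 1 ≤ p i) (hq : ∀ j, rr ≤ q j)
    (C : (((i : Fin r) → J k (p i)) × J k 2) →ₗ[Polynomial k]
      (((j : Fin s) → J k (q j)) × J k rr))
    (hC : ∀ x, ((X : Polynomial k) ^ 2) • C x = 0)
    (hcomp : ¬ ∀ x : J k 2,
      (X : Polynomial k) •
        ((LinearMap.snd (Polynomial k) ((j : Fin s) → J k (q j)) (J k rr))
          (C ((LinearMap.inr (Polynomial k) ((i : Fin r) → J k (p i)) (J k 2)) x))) = 0) :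
    ∃ C' : ((i : Fin r) → J k (p i)) →ₗ[Polynomial k] ((j : Fin s) → J k (q j)),
      (∀ x, ((X : Polynomial k) ^ 2) • C' x = 0) ∧
      ∃ (α : (((i : Fin r) → J k (p i)) × J k 2) ≃ₗ[Polynomial k]
          (((i : Fin r) → J k (p i)) × J k 2))
        (β : (((j : Fin s) → J k (q j)) × J k rr) ≃ₗ[Polynomial k]
          (((j : Fin s) → J k (q j)) × J k rr)),
        β.toLinearMap ∘ₗ C = (C'.prodMap (mulTpow k 2 rr (rr - 2))) ∘ₗ α.toLinearMap := by
  classical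
  set R := Polynomial k with hR
  set XM := (i : Fin r) → J k (p i) with hXM
  set YM := (j : Fin s) → J k (q j) with hYM
  obtain ⟨rr2, hrr2⟩ : ∃ t, rr = t + 2 := ⟨rr - 2, by omega⟩
  have hsub : rr - 2 = rr2 := by omega
  -- components of C
  set A : XM →ₗ[R] YM :=
    (LinearMap.fst R YM (J k rr)) ∘ₗ C ∘ₗ (LinearMap.inl R XM (J k 2)) with hA
  set d : XM →ₗ[R] J k rr :=
    (LinearMap.snd R YM (J k rr)) ∘ₗ C ∘ₗ (LinearMap.inl R XM (J k 2)) with hd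
  set bb : J k 2 →ₗ[R] YM :=
    (LinearMap.fst R YM (J k rr)) ∘ₗ C ∘ₗ (LinearMap.inr R XM (J k 2)) with hbb
  set cc : J k 2 →ₗ[R] J k rr :=
    (LinearMap.snd R YM (J k rr)) ∘ₗ C ∘ₗ (LinearMap.inr R XM (J k 2)) with hcc
  have hA2 : ∀ x : XM, ((X : R) ^ 2) • A x = 0 := fun x =>
    congrArg Prod.fst (hC ((LinearMap.inl R XM (J k 2)) x))
  have hd2 : ∀ x : XM, ((X : R) ^ 2) • d x = 0 := fun x =>
    congrArg Prod.snd (hC ((LinearMap.inl R XM (J k 2)) x))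
  have hbb2 : ∀ t : J k 2, ((X : R) ^ 2) • bb t = 0 := fun t =>
    congrArg Prod.fst (hC ((LinearMap.inr R XM (J k 2)) t))
  have hcc2 : ∀ t : J k 2, ((X : R) ^ 2) • cc t = 0 := fun t =>
    congrArg Prod.snd (hC ((LinearMap.inr R XM (J k 2)) t))
  -- the distinguished element v = cc(1)
  set v : J k rr := cc (Jmk k 2 1) with hv
  have hv2 : ((X : R) ^ 2) • v = 0 := hcc2 _
  have hccf : ∀ f : R, cc (Jmk k 2 f) = f • v := fun f => lin_mk cc f
  have hv1 : (X : R) • v ≠ 0 := by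
    intro h0
    apply hcomp
    intro x
    obtain ⟨f, rfl⟩ := Jmk_surj 2 x
    show (X : R) • cc (Jmk k 2 f) = 0
    rw [hccf, smul_comm, h0, smul_zero]
  -- write v = Jmk (X^rr2 * g) with X ∤ g
  obtain ⟨fv, hfv⟩ := Jmk_surj rr v
  have hdvd : (X : R) ^ rr2 ∣ fv := by
    apply pow_dvd_cancel 2 rr2
    rw [add_comm 2 rr2, ← hrr2, ← Jmk_eq_zero rr, ← Jmk_smul, hfv]
    exact hv2
  obtain ⟨g, hg⟩ := hdvd
  have hgnd : ¬ (X : R) ∣ g := by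
    rintro ⟨g', rfl⟩
    apply hv1
    rw [← hfv, Jmk_smul, Jmk_eq_zero]
    refine ⟨g', ?_⟩
    rw [hg, hrr2, pow_add]; ring
  have hco : IsCoprime g (X : R) := (Polynomial.prime_X.coprime_iff_not_dvd.mpr hgnd).symm
  have hunit : ∀ m : ℕ, ∃ u : R, Jmk k m (g * u) = 1 := by
    intro m
    obtain ⟨u, w, huw⟩ := hco.pow_right (n := m)
    refine ⟨u, ?_⟩
    have h1 : g * u = 1 - w * X ^ m := by linear_combination huw
    have h0 : (Jmk k m (w * X ^ m)) = 0 := (Jmk_eq_zero m _).mpr ⟨w, mul_comm _ _⟩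
    calc Jmk k m (g * u) = Jmk k m 1 - Jmk k m (w * X ^ m) := by
          rw [h1, Jmk, Jmk, Jmk, map_sub]
      _ = 1 := by rw [h0, Jmk_one, sub_zero]
  -- tau
  set τ : J k 2 →ₗ[R] J k rr := mulTpow k 2 rr (rr - 2) with hτdef
  have hτ : ∀ f : R, τ (Jmk k 2 f) = Jmk k rr (X ^ rr2 * f) := by
    intro f
    rw [hτdef, mulTpow_mk 2 rr (rr - 2) (by omega) f, hsub]
  have hτinj : Function.Injective τ := by
    have hker : ∀ z, τ z = 0 → z = 0 := by
      intro z hz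
      obtain ⟨f, rfl⟩ := Jmk_surj 2 z
      rw [hτ] at hz
      have : (X : R) ^ 2 ∣ f := by
        apply pow_dvd_cancel rr2 2
        rw [← hrr2]
        exact (Jmk_eq_zero rr _).mp hz
      exact (Jmk_eq_zero 2 f).mpr this
    intro x y hxy
    exact sub_eq_zero.mp (hker (x - y) (by rw [map_sub, hxy, sub_self]))
  have hrange : ∀ z : J k rr, ((X : R) ^ 2) • z = 0 → z ∈ LinearMap.range τ := by
    intro z hz
    obtain ⟨f, rfl⟩ := Jmk_surj rr z
    have : (X : R) ^ rr2 ∣ f := by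
      apply pow_dvd_cancel 2 rr2
      rw [add_comm 2 rr2, ← hrr2, ← Jmk_eq_zero rr, ← Jmk_smul]
      exact hz
    obtain ⟨h, rfl⟩ := this
    exact ⟨Jmk k 2 h, hτ h⟩
  -- the automorphism γ of J k rr
  obtain ⟨ug, hug⟩ := hunit rr
  have hugg : (Jmk k rr ug) * (Jmk k rr g) = 1 := by
    rw [Jmk_mul, mul_comm]; exact hug
  set γ : J k rr ≃ₗ[R] J k rr := mulUnitEquiv _ (Jmk k rr ug) (Jmk k rr g) hugg with hγdef
  have hγ : ∀ z : J k rr, γ z = (Jmk k rr ug) * z := fun z => rfl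
  -- cc in terms of τ
  have hcmul : ∀ t : J k 2, cc t = (Jmk k rr g) * τ t := by
    intro t
    obtain ⟨f, rfl⟩ := Jmk_surj 2 t
    rw [hccf, hτ, ← hfv, Jmk_smul, Jmk_mul]
    congr 1
    rw [hg]; ring
  have hγc : ∀ t : J k 2, γ (cc t) = τ t := by
    intro t
    rw [hγ, hcmul, ← mul_assoc, hugg, one_mul]
  -- construct σ with τ (σ x) = γ (d x)
  set D : XM →ₗ[R] J k rr := γ.toLinearMap ∘ₗ d with hDdef
  have hD2 : ∀ x, D x ∈ LinearMap.range τ := by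
    intro x
    apply hrange
    show ((X : R) ^ 2) • γ (d x) = 0
    rw [← map_smul, hd2, map_zero]
  set e : J k 2 ≃ₗ[R] LinearMap.range τ := LinearEquiv.ofInjective τ hτinj with hedef
  have he : ∀ y : LinearMap.range τ, τ (e.symm y) = (y : J k rr) := by
    intro y
    conv_rhs => rw [← e.apply_symm_apply y]
    rw [hedef]
    exact (LinearEquiv.ofInjective_apply (f := τ) (h := hτinj) (e.symm y)).symm
  set σ : XM →ₗ[R] J k 2 :=
    e.symm.toLinearMap ∘ₗ (D.codRestrict (LinearMap.range τ) hD2) with hσdef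
  have hσ : ∀ x : XM, τ (σ x) = γ (d x) := by
    intro x
    show τ (e.symm ⟨D x, hD2 x⟩) = γ (d x)
    rw [he]
    rfl
  -- construct ρ with ρ (cc t) = bb t
  set b1 : YM := bb (Jmk k 2 1) with hb1def
  have hb12 : ((X : R) ^ 2) • b1 = 0 := hbb2 _
  have hbbf : ∀ f : R, bb (Jmk k 2 f) = f • b1 := fun f => lin_mk bb f
  have key : ∀ j : Fin s, ∃ ww : J k (q j),
      ((X : R) ^ rr) • ww = 0 ∧ ((X : R) ^ rr2 * g) • ww = b1 j := by
    intro j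
    obtain ⟨f, hf⟩ := Jmk_surj (q j) (b1 j)
    have hqj : rr ≤ q j := hq j
    have hfmod : ((X : R) ^ 2) • (b1 j) = 0 := congrFun hb12 j
    have hdvdf : (X : R) ^ (q j - 2) ∣ f := by
      apply pow_dvd_cancel 2 (q j - 2)
      have h2 : 2 + (q j - 2) = q j := by omega
      rw [h2, ← Jmk_eq_zero (q j), ← Jmk_smul, hf]
      exact hfmod
    obtain ⟨h, hh⟩ := hdvdf
    obtain ⟨u, hu⟩ := hunit (q j)
    refine ⟨Jmk k (q j) ((X : R) ^ (q j - rr) * (u * h)), ?_, ?_⟩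
    · rw [Jmk_smul, Jmk_eq_zero]
      refine ⟨u * h, ?_⟩
      rw [← mul_assoc, ← pow_add]
      congr 2
      omega
    · rw [Jmk_smul, ← hf]
      have epow : (X : R) ^ rr2 * (X : R) ^ (q j - rr) = (X : R) ^ (q j - 2) := by
        rw [← pow_add]; congr 1; omega
      have e1 : (X : R) ^ rr2 * g * ((X : R) ^ (q j - rr) * (u * h))
          = ((X : R) ^ (q j - 2) * h) * (g * u) := by
        rw [← epow]; ring
      rw [e1, ← Jmk_mul, hu, mul_one, hh]
  choose w hw1 hw2 using key
  have hw1' : ((X : R) ^ rr) • (w : YM) = 0 := funext fun j => hw1 j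
  have hw2' : ((X : R) ^ rr2 * g) • (w : YM) = b1 := funext fun j => hw2 j
  set ρ : J k rr →ₗ[R] YM :=
    Submodule.liftQ (Ideal.span {(X : R) ^ rr}) (LinearMap.toSpanSingleton R YM w)
      (by
        rw [Ideal.span_le]
        intro x hx
        rw [Set.mem_singleton_iff] at hx
        subst hx
        refine LinearMap.mem_ker.mpr ?_
        rw [LinearMap.toSpanSingleton_apply]
        exact hw1') with hρdef
  have hρ : ∀ f : R, ρ (Jmk k rr f) = f • (w : YM) := fun f => rfl
  have hρc : ∀ t : J k 2, ρ (cc t) = bb t := by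
    intro t
    obtain ⟨f, rfl⟩ := Jmk_surj 2 t
    rw [hccf, hbbf]
    have h3 : f • v = Jmk k rr (f * ((X : R) ^ rr2 * g)) := by
      rw [← hfv, Jmk_smul, hg]
    rw [h3, hρ, mul_smul, hw2']
  -- the new map C'
  set C' : XM →ₗ[R] YM := A - ρ ∘ₗ d with hC'def
  have hC'2 : ∀ x : XM, ((X : R) ^ 2) • C' x = 0 := by
    intro x
    show ((X : R) ^ 2) • (A x - ρ (d x)) = 0
    rw [smul_sub, hA2, ← map_smul, hd2, map_zero, sub_zero]
  refine ⟨C', hC'2, shearL σ,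
    (shearR (-ρ)).trans ((LinearEquiv.refl R YM).prodCongr γ), ?_⟩
  apply LinearMap.ext
  rintro ⟨x, t⟩
  have hsplitC : C (x, t) = (A x + bb t, d x + cc t) := by
    have h4 : ((x, t) : XM × J k 2)
        = (LinearMap.inl R XM (J k 2)) x + (LinearMap.inr R XM (J k 2)) t := by
      simp
    rw [h4, map_add]
    rfl
  simp only [LinearMap.comp_apply, LinearEquiv.coe_coe, LinearEquiv.trans_apply,
    shearR_apply, shearL_apply, LinearEquiv.prodCongr_apply, LinearEquiv.refl_apply,
    LinearMap.prodMap_apply, hsplitC]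
  show ((A x + bb t) + (-ρ) (d x + cc t), γ (d x + cc t))
      = (C' x, τ (t + σ x))
  rw [LinearMap.neg_apply, map_add, map_add, map_add, hρc, hγc, hσ]
  have hfst : A x + bb t + -(ρ (d x) + bb t) = C' x := by
    show _ = A x - ρ (d x)
    abel
  have hsnd : γ (d x) + τ t = τ t + γ (d x) := by abel
  rw [hfst, hsnd]
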